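/- Let μ_k be the uniform distribution on S_k and π_k the distribution on ℕ of the tree realization number R under μ_k. Then for k > 1 and every c ∈ ℕ, π_k(c) = ∑_{a·b = c, 1 ≤ a ≤ k} (1/k) · π_{k-1}(b); that is, π_k is the Dirichlet convolution of the uniform distribution U_k on {1,...,k} with π_{k-1}. -/

import Mathlib

open Finset

/-- The `i`-th entry of the left inversion vector: `l_i(σ) = #{j ≤ i : σ(j) ≥ σ(i)}`. -/
def linv {n : ℕ} (σ : Equiv.Perm (Fin n)) (i : Fin n) : ℕ :=
  (Finset.univ.filter (fun j : Fin n => j ≤ i ∧ σ i ≤ σ j)).card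

/-- The tree realization number `R(σ) = ∏ᵢ l_i(σ)`. -/
def TRN {n : ℕ} (σ : Equiv.Perm (Fin n)) : ℕ := ∏ i, linv σ i

namespace Stmt17Aux

open Equiv

/-- Extend a permutation of `Fin n` to one of `Fin (n+1)` sending `last` to `v`. -/
def ext {n : ℕ} (v : Fin (n + 1)) (τ : Equiv.Perm (Fin n)) : Equiv.Perm (Fin (n + 1)) :=
  (finSuccEquiv' (Fin.last n)).trans ((Equiv.optionCongr τ).trans (finSuccEquiv' v).symm)

@[simp] lemma ext_last {n : ℕ} (v : Fin (n + 1)) (τ : Equiv.Perm (Fin n)) :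
    ext v τ (Fin.last n) = v := by
  simp [ext]

@[simp] lemma ext_castSucc {n : ℕ} (v : Fin (n + 1)) (τ : Equiv.Perm (Fin n)) (j : Fin n) :
    ext v τ (Fin.castSucc j) = v.succAbove (τ j) := by
  simp [ext, ← Fin.succAbove_last]

lemma ext_injective {n : ℕ} : Function.Injective
    (fun p : Fin (n + 1) × Equiv.Perm (Fin n) => ext p.1 p.2) := by
  rintro ⟨v, τ⟩ ⟨v', τ'⟩ h
  simp only at h
  have hv : v = v' := by
    have := congrArg (fun e : Equiv.Perm (Fin (n+1)) => e (Fin.last n)) h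
    simpa using this
  subst hv
  have hτ : τ = τ' := by
    apply Equiv.ext; intro j
    have := congrArg (fun e : Equiv.Perm (Fin (n+1)) => e (Fin.castSucc j)) h
    simp only [ext_castSucc] at this
    exact Fin.succAbove_right_injective this
  simp [hτ]

lemma ext_surjective {n : ℕ} (σ : Equiv.Perm (Fin (n + 1))) :
    ∃ v τ, ext v τ = σ := by
  set v := σ (Fin.last n) with hv
  set e : Option (Fin n) ≃ Option (Fin n) :=
    (finSuccEquiv' (Fin.last n)).symm.trans (σ.trans (finSuccEquiv' v)) with he
  refine ⟨v, Equiv.removeNone e, ?_⟩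
  apply Equiv.ext; intro x
  induction x using Fin.lastCases with
  | last => simp [hv]
  | cast j =>
    rw [ext_castSucc]
    have hne : σ (Fin.castSucc j) ≠ v := by
      simp only [hv]
      exact fun h => (Fin.castSucc_lt_last j).ne (σ.injective h)
    have hsome : ∃ x', e (some j) = some x' := by
      have : e (some j) = finSuccEquiv' v (σ (Fin.castSucc j)) := by
        simp [he]
      rw [this]
      rcases h2 : finSuccEquiv' v (σ (Fin.castSucc j)) with _ | x'
      · exfalso
        apply hne
        have := congrArg (finSuccEquiv' v).symm h2
        simpa using this
      · exact ⟨x', rfl⟩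
    have h3 : some (Equiv.removeNone e j) = e (some j) := Equiv.removeNone_some e hsome
    have h4 : e (some j) = finSuccEquiv' v (σ (Fin.castSucc j)) := by simp [he]
    rw [h4] at h3
    have := congrArg (finSuccEquiv' v).symm h3
    simpa using this

end Stmt17Aux

lemma linv_pos {n : ℕ} (σ : Equiv.Perm (Fin n)) (i : Fin n) : 0 < linv σ i := by
  rw [linv, Finset.card_pos]
  exact ⟨i, by simp⟩

lemma TRN_pos {n : ℕ} (σ : Equiv.Perm (Fin n)) : 0 < TRN σ :=
  Finset.prod_pos fun i _ => linv_pos σ i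

lemma linv_last {n : ℕ} (σ : Equiv.Perm (Fin (n + 1))) :
    linv σ (Fin.last n) = n + 1 - (σ (Fin.last n)).val := by
  rw [linv]
  have h1 : (Finset.univ.filter fun j : Fin (n+1) => j ≤ Fin.last n ∧ σ (Fin.last n) ≤ σ j)
      = Finset.univ.filter fun j => σ (Fin.last n) ≤ σ j := by
    apply Finset.filter_congr
    intro j _
    simp [Fin.le_last]
  rw [h1]
  have h2 : (Finset.univ.filter fun j : Fin (n+1) => σ (Fin.last n) ≤ σ j).card
      = (Finset.univ.filter fun w : Fin (n+1) => σ (Fin.last n) ≤ w).card := by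
    apply Finset.card_bij (fun j _ => σ j)
    · intro j hj; simp only [Finset.mem_filter] at *; exact ⟨Finset.mem_univ _, hj.2⟩
    · intro a _ b _ h; exact σ.injective h
    · intro w hw
      refine ⟨σ.symm w, ?_, by simp⟩
      simp only [Finset.mem_filter, Finset.mem_univ, true_and] at *
      simpa using hw
  rw [h2]
  have h3 : (Finset.univ.filter fun w : Fin (n+1) => σ (Fin.last n) ≤ w) =
      Finset.Ici (σ (Fin.last n)) := by
    ext w; simp
  rw [h3, Fin.card_Ici]

lemma linv_ext_castSucc {n : ℕ} (v : Fin (n + 1)) (τ : Equiv.Perm (Fin n)) (i : Fin n) :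
    linv (Stmt17Aux.ext v τ) (Fin.castSucc i) = linv τ i := by
  rw [linv, linv]
  symm
  apply Finset.card_bij (fun j _ => Fin.castSucc j)
  · intro j hj
    simp only [Finset.mem_filter, Finset.mem_univ, true_and] at *
    rw [Stmt17Aux.ext_castSucc, Stmt17Aux.ext_castSucc, Fin.castSucc_le_castSucc_iff,
      Fin.succAbove_le_succAbove_iff]
    exact hj
  · intro a _ b _ h
    exact Fin.castSucc_injective n h
  · intro j hj
    simp only [Finset.mem_filter, Finset.mem_univ, true_and] at hj
    have hne : j ≠ Fin.last n := by
      intro h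
      subst h
      exact absurd hj.1 (Fin.castSucc_lt_last i).not_ge
    refine ⟨j.castPred hne, ?_, by simp⟩
    simp only [Finset.mem_filter, Finset.mem_univ, true_and]
    have hj' := hj
    rw [← Fin.castSucc_castPred j hne] at hj'
    rw [Stmt17Aux.ext_castSucc, Stmt17Aux.ext_castSucc, Fin.castSucc_le_castSucc_iff,
      Fin.succAbove_le_succAbove_iff] at hj'
    exact hj'

lemma TRN_ext {n : ℕ} (v : Fin (n + 1)) (τ : Equiv.Perm (Fin n)) :
    TRN (Stmt17Aux.ext v τ) = (n + 1 - v.val) * TRN τ := by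
  rw [TRN, Fin.prod_univ_castSucc]
  simp only [linv_ext_castSucc, linv_last, Stmt17Aux.ext_last]
  rw [TRN, mul_comm]

lemma count_succ {n c : ℕ} :
    (Finset.univ.filter fun σ : Equiv.Perm (Fin (n+1)) => TRN σ = c).card
      = ∑ v : Fin (n+1),
        (Finset.univ.filter fun τ : Equiv.Perm (Fin n) => (n + 1 - v.val) * TRN τ = c).card := by
  have h1 : (Finset.univ.filter fun σ : Equiv.Perm (Fin (n+1)) => TRN σ = c).card
      = ((Finset.univ : Finset (Fin (n+1) × Equiv.Perm (Fin n))).filter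
          fun p => (n + 1 - p.1.val) * TRN p.2 = c).card := by
    symm
    apply Finset.card_bij (fun p _ => Stmt17Aux.ext p.1 p.2)
    · intro p hp
      simp only [Finset.mem_filter, Finset.mem_univ, true_and] at *
      rw [TRN_ext]; exact hp
    · intro a _ b _ h
      exact Stmt17Aux.ext_injective h
    · intro σ hσ
      simp only [Finset.mem_filter, Finset.mem_univ, true_and] at hσ
      obtain ⟨v, τ, h⟩ := Stmt17Aux.ext_surjective σ
      refine ⟨(v, τ), ?_, h⟩
      simp only [Finset.mem_filter, Finset.mem_univ, true_and]
      rw [← TRN_ext, h]; exact hσ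
  rw [h1, Finset.card_eq_sum_card_fiberwise
    (f := Prod.fst) (t := Finset.univ) (fun p _ => Finset.mem_univ _)]
  apply Finset.sum_congr rfl
  intro v _
  apply Finset.card_bij (fun p _ => p.2)
  · intro p hp
    simp only [Finset.mem_filter, Finset.mem_univ, true_and] at *
    rw [← hp.2]; exact hp.1
  · intro a ha b hb h
    simp only [Finset.mem_filter] at ha hb
    exact Prod.ext (ha.2.trans hb.2.symm) h
  · intro τ hτ
    simp only [Finset.mem_filter, Finset.mem_univ, true_and] at hτ
    exact ⟨(v, τ), by simp [hτ], rfl⟩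

lemma count_succ' {n c : ℕ} :
    (Finset.univ.filter fun σ : Equiv.Perm (Fin (n+1)) => TRN σ = c).card
      = ∑ a ∈ Finset.Icc 1 (n+1),
        (Finset.univ.filter fun τ : Equiv.Perm (Fin n) => a * TRN τ = c).card := by
  rw [count_succ]
  apply Finset.sum_nbij' (i := fun v : Fin (n+1) => n + 1 - v.val)
    (j := fun a => (⟨n - (a - 1), by omega⟩ : Fin (n+1)))
  · intro v _
    simp only [Finset.mem_Icc]
    omega
  · intro a _
    exact Finset.mem_univ _
  · intro v _
    have hv := v.isLt
    apply Fin.ext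
    show n - (n + 1 - v.val - 1) = v.val
    omega
  · intro a ha
    simp only [Finset.mem_Icc] at ha
    show n + 1 - (n - (a - 1)) = a
    omega
  · intro v _
    rfl

lemma count_div {n a c : ℕ} (ha : 1 ≤ a) :
    (Finset.univ.filter fun τ : Equiv.Perm (Fin n) => a * TRN τ = c).card
      = if a ∣ c then (Finset.univ.filter fun τ : Equiv.Perm (Fin n) => TRN τ = c / a).card
        else 0 := by
  split_ifs with h
  · obtain ⟨b, rfl⟩ := h
    rw [Nat.mul_div_cancel_left b (by omega)]
    congr 1
    apply Finset.filter_congr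
    intro τ _
    constructor
    · intro hh; exact Nat.eq_of_mul_eq_mul_left (by omega) hh
    · intro hh; rw [hh]
  · rw [Finset.card_eq_zero, Finset.filter_eq_empty_iff]
    intro τ _ hh
    exact h ⟨TRN τ, hh.symm⟩

lemma nat_id {n c : ℕ} (hc : c ≠ 0) :
    (Finset.univ.filter fun σ : Equiv.Perm (Fin (n+1)) => TRN σ = c).card
      = ∑ p ∈ c.divisorsAntidiagonal,
          if p.1 ≤ n + 1 then
            (Finset.univ.filter fun τ : Equiv.Perm (Fin n) => TRN τ = p.2).card
          else 0 := by
  rw [count_succ']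
  have h1 : ∀ a ∈ Finset.Icc 1 (n+1),
      (Finset.univ.filter fun τ : Equiv.Perm (Fin n) => a * TRN τ = c).card
        = if a ∣ c then
            (Finset.univ.filter fun τ : Equiv.Perm (Fin n) => TRN τ = c / a).card
          else 0 := fun a ha => count_div (Finset.mem_Icc.mp ha).1
  rw [Finset.sum_congr rfl h1,
    Nat.sum_divisorsAntidiagonal (fun a b =>
      if a ≤ n + 1 then
        (Finset.univ.filter fun τ : Equiv.Perm (Fin n) => TRN τ = b).card
      else 0),
    ← Finset.sum_filter, ← Finset.sum_filter]
  apply Finset.sum_congr _ (fun _ _ => rfl)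
  ext a
  simp only [Finset.mem_filter, Finset.mem_Icc, Nat.mem_divisors]
  constructor
  · rintro ⟨⟨_, h2a⟩, h3a⟩
    exact ⟨⟨h3a, hc⟩, h2a⟩
  · rintro ⟨⟨h1a, _⟩, h2a⟩
    exact ⟨⟨Nat.pos_of_dvd_of_pos h1a (Nat.pos_of_ne_zero hc), h2a⟩, h1a⟩




/-- `π_k(c)`: the probability that the tree realization number equals `c` under
the uniform distribution on `S_k`. -/
noncomputable def pid (k : ℕ) (c : ℕ) : ℚ :=
  ((Finset.univ.filter (fun σ : Equiv.Perm (Fin k) => TRN σ = c)).card : ℚ) /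
    (Nat.factorial k : ℚ)

/-- The uniform distribution `U_k` on `{1,…,k}`. -/
def unif (k : ℕ) (a : ℕ) : ℚ := if 1 ≤ a ∧ a ≤ k then 1 / k else 0

/-- For `k > 1`, `π_k = U_k * π_{k-1}` (Dirichlet convolution):
`π_k(c) = ∑_{ab=c} U_k(a) π_{k-1}(b)`. -/
theorem stmt_17 (k : ℕ) (hk : 1 < k) (c : ℕ) :
    pid k c = ∑ p ∈ Nat.divisorsAntidiagonal c, unif k p.1 * pid (k - 1) p.2 := by
  obtain ⟨n, rfl⟩ : ∃ n, k = n + 2 := ⟨k - 2, by omega⟩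
  by_cases hc : c = 0
  · subst hc
    have hfe : (Finset.univ.filter fun σ : Equiv.Perm (Fin (n+2)) => TRN σ = 0) = ∅ := by
      rw [Finset.filter_eq_empty_iff]
      intro σ _
      exact (TRN_pos σ).ne'
    rw [pid, hfe]
    simp
  · have key : (Finset.univ.filter fun σ : Equiv.Perm (Fin (n+2)) => TRN σ = c).card
        = ∑ p ∈ c.divisorsAntidiagonal,
            if p.1 ≤ n + 2 then
              (Finset.univ.filter fun τ : Equiv.Perm (Fin (n+1)) => TRN τ = p.2).card
            else 0 := nat_id hc
    rw [pid, key]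
    push_cast
    rw [Finset.sum_div]
    apply Finset.sum_congr rfl
    intro p hp
    have h1 : 1 ≤ p.1 :=
      Nat.pos_of_mem_divisors (Nat.fst_mem_divisors_of_mem_antidiagonal hp)
    show _ = unif (n+2) p.1 * pid (n+1) p.2
    rw [unif, pid]
    by_cases hple : p.1 ≤ n + 2
    · rw [if_pos hple, if_pos ⟨h1, hple⟩, Nat.factorial_succ]
      have hfac : (Nat.factorial (n+1) : ℚ) ≠ 0 := by
        exact_mod_cast (Nat.factorial_pos (n+1)).ne'
      push_cast
      rw [div_mul_div_comm, one_mul]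
      ring_nf
    · rw [if_neg hple, if_neg (fun h => hple h.2)]
      simp
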